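/- The area of one of Foss–Zuyev's seven petals of radius r equals 2r²(π/7 + sin(π/7)cos(3π/7)). Here the petal is the intersection of the two disks of radius r centered at the polar points (r, 0) and (r, 2π/7) with the angular sector between the rays φ = 0 and φ = 2π/7. -/

import Mathlib

open MeasureTheory Real Complex

private lemma disk_cond (r ρ φ β : ℝ) (hρ : 0 < ρ) (hr : 0 ≤ r) :
    ‖Complex.polarCoord.symm (ρ, φ) - (r : ℂ) * Complex.exp ((β : ℝ) * Complex.I)‖ ≤ r
      ↔ ρ ≤ 2 * r * Real.cos (φ - β) := by
  rw [Complex.polarCoord_symm_apply, Complex.exp_mul_I, Complex.norm_def,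
    Real.sqrt_le_left hr]
  have hsq : Complex.normSq ((ρ : ℂ) * (Real.cos φ + Real.sin φ * Complex.I)
      - (r : ℂ) * (Complex.cos β + Complex.sin β * Complex.I))
      = ρ^2 + r^2 - 2*ρ*r*Real.cos (φ - β) := by
    rw [← Complex.ofReal_cos, ← Complex.ofReal_sin, Real.cos_sub]
    simp [Complex.normSq_apply, Complex.mul_re, Complex.mul_im, Complex.cos_ofReal_re,
      Complex.sin_ofReal_re, Complex.cos_ofReal_im, Complex.sin_ofReal_im]
    nlinarith [Real.sin_sq_add_cos_sq φ, Real.sin_sq_add_cos_sq β]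
  rw [hsq]
  constructor
  · intro h; nlinarith
  · intro h; nlinarith

private lemma trig_id : Real.cos (2*π/7) * Real.sin (2*π/7) - Real.cos (π/7) * Real.sin (π/7)
    = Real.sin (π/7) * Real.cos (3*π/7) := by
  rw [show (3:ℝ)*π/7 = 2*(π/7) + π/7 by ring, show (2:ℝ)*π/7 = 2*(π/7) by ring,
    Real.cos_add, Real.sin_two_mul, Real.cos_two_mul]
  linear_combination (2 * Real.sin (π/7) * Real.cos (π/7)) * (Real.sin_sq_add_cos_sq (π/7))

theorem foss_zuyev_petal_area (r : ℝ) (hr : 0 < r) :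
    volume {z : ℂ |
        ‖z - (r : ℂ)‖ ≤ r ∧
        ‖z - (r : ℂ) * Complex.exp ((2 * π / 7 : ℝ) * Complex.I)‖ ≤ r ∧
        (z = 0 ∨ (0 ≤ z.arg ∧ z.arg ≤ 2 * π / 7))} =
      ENNReal.ofReal (2 * r ^ 2 * (π / 7 + Real.sin (π / 7) * Real.cos (3 * π / 7))) := by
  have hπ : 0 < π := Real.pi_pos
  set θ : ℝ := 2 * π / 7 with hθdef
  have hθ0 : 0 < θ := by positivity
  have hθπ2 : θ < π / 2 := by rw [hθdef]; linarith
  have hθπ : θ < π := by linarith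
  set S : Set ℂ := {z : ℂ |
        ‖z - (r : ℂ)‖ ≤ r ∧
        ‖z - (r : ℂ) * Complex.exp ((2 * π / 7 : ℝ) * Complex.I)‖ ≤ r ∧
        (z = 0 ∨ (0 ≤ z.arg ∧ z.arg ≤ 2 * π / 7))} with hSdef
  set m : ℝ → ℝ := fun φ => min (2 * r * Real.cos φ) (2 * r * Real.cos (θ - φ)) with hmdef
  have hmc : Continuous m := by
    apply Continuous.min
    · exact continuous_const.mul Real.continuous_cos
    · exact continuous_const.mul (Real.continuous_cos.comp (continuous_const.sub continuous_id))
  have hmpos : ∀ φ ∈ Set.Icc (0:ℝ) θ, 0 < m φ := by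
    intro φ hφ
    apply lt_min
    · have : 0 < Real.cos φ := Real.cos_pos_of_mem_Ioo ⟨by linarith [hφ.1], by linarith [hφ.2]⟩
      positivity
    · have : 0 < Real.cos (θ - φ) :=
        Real.cos_pos_of_mem_Ioo ⟨by linarith [hφ.2], by linarith [hφ.1]⟩
      positivity
  have hmle : ∀ φ, m φ ≤ 2 * r := fun φ =>
    (min_le_left _ _).trans (by nlinarith [Real.cos_le_one φ])
  set T : Set (ℝ × ℝ) := {p | 0 ≤ p.2 ∧ p.2 ≤ θ ∧ 0 < p.1 ∧ p.1 ≤ m p.2} with hTdef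
  have hTmeas : MeasurableSet T := by
    exact (measurableSet_le measurable_const measurable_snd).inter
      ((measurableSet_le measurable_snd measurable_const).inter
        ((measurableSet_lt measurable_const measurable_fst).inter
          (measurableSet_le measurable_fst (hmc.measurable.comp measurable_snd))))
  have hTsub : T ⊆ polarCoord.target := by
    rintro p ⟨h1, h2, h3, h4⟩
    exact ⟨h3, by linarith, by linarith⟩
  -- membership iff
  have hmem : ∀ p ∈ polarCoord.target, (Complex.polarCoord.symm p ∈ S ↔ p ∈ T) := by
    rintro ⟨ρ, φ⟩ ⟨(hρ : 0 < ρ), hφ1, hφ2⟩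
    have hz0 : Complex.polarCoord.symm (ρ, φ) ≠ 0 := by
      intro h
      have := Complex.norm_polarCoord_symm (ρ, φ)
      rw [h] at this
      simp only [norm_zero] at this
      rw [abs_of_pos hρ] at this
      exact hρ.ne' this.symm
    have harg : (Complex.polarCoord.symm (ρ, φ)).arg = φ := by
      rw [Complex.polarCoord_symm_apply]
      simp only [Complex.ofReal_cos, Complex.ofReal_sin]
      exact Complex.arg_mul_cos_add_sin_mul_I hρ ⟨hφ1, hφ2.le⟩
    have hc1 : (r : ℂ) = (r : ℂ) * Complex.exp (((0:ℝ) : ℂ) * Complex.I) := by simp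
    constructor
    · rintro ⟨h1, h2, h3⟩
      rw [hc1] at h1
      rw [disk_cond r ρ φ 0 hρ hr.le, sub_zero] at h1
      rw [disk_cond r ρ φ (2*π/7) hρ hr.le] at h2
      have hφθ : 0 ≤ φ ∧ φ ≤ θ := by
        rcases h3 with h | h
        · exact absurd h hz0
        · rw [harg] at h; exact h
      refine ⟨hφθ.1, hφθ.2, hρ, le_min h1 ?_⟩
      rwa [← Real.cos_neg, neg_sub] at h2
    · rintro ⟨h1, h2, h3, h4⟩
      rw [le_min_iff] at h4
      refine ⟨?_, ?_, Or.inr ?_⟩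
      · rw [hc1, disk_cond r ρ φ 0 hρ hr.le, sub_zero]; exact h4.1
      · rw [disk_cond r ρ φ (2*π/7) hρ hr.le, ← Real.cos_neg, neg_sub]; exact h4.2
      · rw [harg]; exact ⟨h1, h2⟩
  -- measurability of S
  have hSmeas : MeasurableSet S := by
    have h1 : MeasurableSet {z : ℂ | ‖z - (r:ℂ)‖ ≤ r} :=
      measurableSet_le ((continuous_norm.comp (continuous_id.sub continuous_const)).measurable)
        measurable_const
    have h2 : MeasurableSet {z : ℂ |
        ‖z - (r : ℂ) * Complex.exp ((2 * π / 7 : ℝ) * Complex.I)‖ ≤ r} :=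
      measurableSet_le ((continuous_norm.comp (continuous_id.sub continuous_const)).measurable)
        measurable_const
    have h3 : MeasurableSet {z : ℂ | z = 0 ∨ (0 ≤ z.arg ∧ z.arg ≤ 2 * π / 7)} := by
      refine MeasurableSet.union ?_ ?_
      · exact measurableSet_eq
      · exact (measurableSet_le measurable_const Complex.measurable_arg).inter
          (measurableSet_le Complex.measurable_arg measurable_const)
    exact h1.inter (h2.inter h3)
  have hfin : volume S ≠ ⊤ := by
    have hsub : S ⊆ Metric.closedBall (r : ℂ) r := by
      intro z hz
      rw [Metric.mem_closedBall, Complex.dist_eq]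
      exact hz.1
    exact ((measure_mono hsub).trans_lt (measure_closedBall_lt_top)).ne
  -- main computation
  have key : (volume S).toReal = 2 * r ^ 2 * (π / 7 + Real.sin (π / 7) * Real.cos (3 * π / 7)) := by
    rw [← measureReal_def, ← integral_indicator_one hSmeas]
    rw [← Complex.integral_comp_polarCoord_symm (S.indicator 1)]
    have step1 : ∫ p in polarCoord.target, p.1 • S.indicator 1 (Complex.polarCoord.symm p)
        = ∫ p in polarCoord.target, T.indicator (fun p : ℝ × ℝ => p.1) p := by
      apply setIntegral_congr_fun polarCoord.open_target.measurableSet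
      intro p hp
      dsimp only
      by_cases h : p ∈ T
      · rw [Set.indicator_of_mem ((hmem p hp).mpr h), Set.indicator_of_mem h]
        simp
      · rw [Set.indicator_of_notMem (fun hz => h ((hmem p hp).mp hz)),
          Set.indicator_of_notMem h, smul_zero]
    rw [step1, setIntegral_indicator hTmeas, Set.inter_eq_right.mpr hTsub]
    -- Fubini
    have hInt : Integrable (T.indicator (fun p : ℝ × ℝ => p.1)) volume := by
      rw [integrable_indicator_iff hTmeas]
      have hK : IntegrableOn (fun p : ℝ × ℝ => p.1)
          (Set.Icc (0:ℝ) (2*r) ×ˢ Set.Icc (0:ℝ) θ) volume :=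
        ContinuousOn.integrableOn_compact (isCompact_Icc.prod isCompact_Icc)
          continuous_fst.continuousOn
      apply hK.mono_set
      rintro p ⟨h1, h2, h3, h4⟩
      exact ⟨⟨h3.le, h4.trans (hmle p.2)⟩, h1, h2⟩
    have hInt' : Integrable (T.indicator (fun p : ℝ × ℝ => p.1)) (volume.prod volume) := by
      rwa [← MeasureTheory.Measure.volume_eq_prod]
    have step2 : ∫ x in T, (x : ℝ × ℝ).1 ∂volume = ∫ φ in (0:ℝ)..θ, m φ ^ 2 / 2 := by
      rw [← integral_indicator hTmeas, MeasureTheory.Measure.volume_eq_prod,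
        integral_prod_symm _ hInt']
      have inner : ∀ φ : ℝ, (∫ ρ : ℝ, T.indicator (fun p : ℝ × ℝ => p.1) (ρ, φ))
          = (Set.Icc (0:ℝ) θ).indicator (fun φ => m φ ^ 2 / 2) φ := by
        intro φ
        by_cases hφ : 0 ≤ φ ∧ φ ≤ θ
        · have heq : (fun ρ : ℝ => T.indicator (fun p : ℝ × ℝ => p.1) (ρ, φ))
              = (Set.Ioc (0:ℝ) (m φ)).indicator id := by
            funext ρ
            rw [Set.indicator_apply, Set.indicator_apply]
            have : (ρ, φ) ∈ T ↔ ρ ∈ Set.Ioc (0:ℝ) (m φ) := by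
              simp only [hTdef, Set.mem_setOf_eq, Set.mem_Ioc]
              exact ⟨fun h => ⟨h.2.2.1, h.2.2.2⟩, fun h => ⟨hφ.1, hφ.2, h.1, h.2⟩⟩
            simp [this]
          rw [heq, integral_indicator measurableSet_Ioc,
            ← intervalIntegral.integral_of_le (hmpos φ (Set.mem_Icc.mpr ⟨hφ.1, hφ.2⟩)).le,
            Set.indicator_of_mem (Set.mem_Icc.mpr ⟨hφ.1, hφ.2⟩)]
          simpa using intervalIntegral.integral_id (a := (0:ℝ)) (b := m φ)
        · have heq : (fun ρ : ℝ => T.indicator (fun p : ℝ × ℝ => p.1) (ρ, φ))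
              = fun _ => 0 := by
            funext ρ
            apply Set.indicator_of_notMem
            rintro ⟨h1, h2, h3, h4⟩
            exact hφ ⟨h1, h2⟩
          rw [heq, Set.indicator_of_notMem (by simpa [Set.mem_Icc] using hφ)]
          simp
      rw [show (fun y => ∫ x : ℝ, T.indicator (fun p : ℝ × ℝ => p.1) (x, y)) =
          (Set.Icc (0:ℝ) θ).indicator (fun φ => m φ ^ 2 / 2) from funext inner]
      rw [integral_indicator measurableSet_Icc, MeasureTheory.integral_Icc_eq_integral_Ioc,
        ← intervalIntegral.integral_of_le hθ0.le]
    rw [step2]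
    have h7 : (0:ℝ) < π / 7 := by positivity
    have h7θ : π / 7 ≤ θ := by rw [hθdef]; linarith
    have hii : ∀ a b : ℝ, IntervalIntegrable (fun x => m x ^ 2 / 2) volume a b := fun a b =>
      ((hmc.pow 2).div_const 2).intervalIntegrable a b
    rw [← intervalIntegral.integral_add_adjacent_intervals (hii 0 (π/7)) (hii (π/7) θ)]
    have e1 : ∫ x in (0:ℝ)..(π/7), m x ^ 2 / 2
        = ∫ x in (π/7:ℝ)..θ, (2*r*Real.cos x) ^ 2 / 2 := by
      have estep : ∫ x in (0:ℝ)..(π/7), m x ^ 2 / 2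
          = ∫ x in (0:ℝ)..(π/7), (fun u => (2*r*Real.cos u) ^ 2 / 2) (θ - x) := by
        apply intervalIntegral.integral_congr
        intro x hx
        rw [Set.uIcc_of_le h7.le] at hx
        have hmin : m x = 2*r*Real.cos (θ - x) := by
          apply min_eq_right
          have h1 : Real.cos (θ - x) ≤ Real.cos x :=
            Real.cos_le_cos_of_nonneg_of_le_pi hx.1 (by linarith [hx.1]) (by
              have : x ≤ π / 7 := hx.2
              rw [hθdef]; linarith)
          nlinarith
        dsimp only
        rw [hmin]
      rw [estep, intervalIntegral.integral_comp_sub_left (fun u => (2*r*Real.cos u) ^ 2 / 2) θ,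
        sub_zero, show θ - π/7 = π/7 by rw [hθdef]; ring]
    have e2 : ∫ x in (π/7:ℝ)..θ, m x ^ 2 / 2
        = ∫ x in (π/7:ℝ)..θ, (2*r*Real.cos x) ^ 2 / 2 := by
      apply intervalIntegral.integral_congr
      intro x hx
      rw [Set.uIcc_of_le h7θ] at hx
      have hmin : m x = 2*r*Real.cos x := by
        apply min_eq_left
        have h1 : Real.cos x ≤ Real.cos (θ - x) :=
          Real.cos_le_cos_of_nonneg_of_le_pi (by rw [hθdef] at hx ⊢; linarith [hx.2])
            (by linarith [hx.2, hθπ]) (by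
              have : π / 7 ≤ x := hx.1
              rw [hθdef]; linarith)
        nlinarith
      dsimp only
      rw [hmin]
    have e3 : ∫ x in (π/7:ℝ)..θ, (2*r*Real.cos x) ^ 2 / 2
        = 2*r^2 * ∫ x in (π/7:ℝ)..θ, Real.cos x ^ 2 := by
      rw [← intervalIntegral.integral_const_mul]
      apply intervalIntegral.integral_congr
      intro x _
      ring
    rw [e1, e2, e3, integral_cos_sq, hθdef]
    linear_combination (2*r^2) * trig_id
  rw [← key, ENNReal.ofReal_toReal hfin]
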